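/- Let (R, P, α) be a pre-log ring and let (f, f♭) : (R, P) → (A, M) be a map of pre-log rings whose induced map of logifications (A, Pᵃ') → (A, Mᵃ) is an isomorphism (i.e. the map is strict), where Pᵃ' denotes the logification of the pre-log structure P → (R,·) → (A,·). If additionally R → A is surjective with square-zero kernel, then Mᵃ is isomorphic to the pushout of commutative monoids Pᵃ ← Rˣ → Aˣ, where Pᵃ is the logification of (R, P) and Rˣ → Pᵃ is the canonical inclusion of units. -/

import Mathlib

/-- Let `(f, f♭) : (R, P) → (A, M)` be a strict map of pre-log rings whose
underlying ring map is surjective with square-zero kernel.  Strictness means that `Mᵃ` agrees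
with the logification of the inverse-image pre-log structure `P → (R,·) → (A,·)`; here this
is encoded by presenting `Mᵃ` (= `Ma`) as the pushout of `P ← (f∘α_R)⁻¹(Aˣ) → Aˣ`.  Let
`Pᵃ` (= `Pa`) be the logification of `(R, P)`, presented as the pushout of
`P ← α_R⁻¹(Rˣ) → Rˣ`, and let `ψ : Pᵃ → Mᵃ` be the induced map.  Then `Mᵃ` is the pushout
of commutative monoids `Pᵃ ← Rˣ → Aˣ`: the maps `ψ` and `Aˣ → Mᵃ` satisfy the universal
property of the pushout along `Rˣ → Pᵃ` and `Rˣ → Aˣ`. -/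
theorem strict_sq_zero_logification_pushout
    {R A P M : Type} [CommRing R] [CommRing A] [CommMonoid P] [CommMonoid M]
    (αR : P →* R) (αA : M →* A) (f : R →+* A) (fb : P →* M)
    (hcompat : ∀ x : P, f (αR x) = αA (fb x))
    (hsurj : Function.Surjective f)
    (hsq : ∀ x y : R, f x = 0 → f y = 0 → x * y = 0)
    -- the logification `Pᵃ` of `(R, P)`
    (Pa : Type) [CommMonoid Pa] (jP : P →* Pa) (uR : Rˣ →* Pa)
    (rR : (Submonoid.comap αR (IsUnit.submonoid R)) →* Rˣ)
    (hrR : ∀ x : Submonoid.comap αR (IsUnit.submonoid R), ((rR x : Rˣ) : R) = αR x)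
    (hPa : ∀ x : Submonoid.comap αR (IsUnit.submonoid R), jP (x : P) = uR (rR x))
    (hPapush : ∀ (T : Type) [CommMonoid T] (g : P →* T) (h : Rˣ →* T),
      (∀ x : Submonoid.comap αR (IsUnit.submonoid R), g (x : P) = h (rR x)) →
      ∃! k : Pa →* T, (∀ x, k (jP x) = g x) ∧ (∀ v, k (uR v) = h v))
    -- strictness: `Mᵃ` is the logification of the inverse-image pre-log structure
    (Ma : Type) [CommMonoid Ma] (jM : M →* Ma) (uA : Aˣ →* Ma)
    (rInv : (Submonoid.comap (f.toMonoidHom.comp αR) (IsUnit.submonoid A)) →* Aˣ)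
    (hrInv : ∀ x : Submonoid.comap (f.toMonoidHom.comp αR) (IsUnit.submonoid A),
      ((rInv x : Aˣ) : A) = f (αR (x : P)))
    (hMa : ∀ x : Submonoid.comap (f.toMonoidHom.comp αR) (IsUnit.submonoid A),
      jM (fb (x : P)) = uA (rInv x))
    (hMapush : ∀ (T : Type) [CommMonoid T] (g : P →* T) (h : Aˣ →* T),
      (∀ x : Submonoid.comap (f.toMonoidHom.comp αR) (IsUnit.submonoid A),
        g (x : P) = h (rInv x)) →
      ∃! k : Ma →* T, (∀ x, k (jM (fb x)) = g x) ∧ (∀ v, k (uA v) = h v))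
    -- the induced map `ψ : Pᵃ → Mᵃ`
    (ψ : Pa →* Ma) (hψj : ∀ x : P, ψ (jP x) = jM (fb x))
    (hψu : ∀ v : Rˣ, ψ (uR v) = uA (Units.map f.toMonoidHom v)) :
    ∀ (T : Type) [CommMonoid T] (g : Pa →* T) (h : Aˣ →* T),
      (∀ v : Rˣ, g (uR v) = h (Units.map f.toMonoidHom v)) →
      ∃! k : Ma →* T, (∀ x, k (ψ x) = g x) ∧ (∀ v, k (uA v) = h v) := by
  intro T _ g h hgh
  -- key: units of R are preimages of units of A
  have keyUnit : ∀ r : R, IsUnit (f r) → IsUnit r := by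
    intro r hu
    obtain ⟨u, hu⟩ := hu
    obtain ⟨s, hs⟩ := hsurj ((u⁻¹ : Aˣ) : A)
    set n := r * s - 1 with hn
    have hfn : f n = 0 := by
      simp [hn, hs, ← hu]
    have hn2 : n * n = 0 := hsq n n hfn hfn
    refine IsUnit.of_mul_eq_one (a := r) (b := s * (1 - n)) ?_
    have : r * s = 1 + n := by rw [hn]; ring
    calc r * (s * (1 - n)) = (r * s) * (1 - n) := by ring
      _ = (1 + n) * (1 - n) := by rw [this]
      _ = 1 - n * n := by ring
      _ = 1 := by rw [hn2]; ring
  -- lift points of the inverse-image submonoid to the P-submonoid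
  have lift : ∀ x : Submonoid.comap (f.toMonoidHom.comp αR) (IsUnit.submonoid A),
      (x : P) ∈ Submonoid.comap αR (IsUnit.submonoid R) := by
    intro x
    exact keyUnit (αR (x : P)) x.2
  -- compatibility for constructing k via hMapush
  have hcomp : ∀ x : Submonoid.comap (f.toMonoidHom.comp αR) (IsUnit.submonoid A),
      (g.comp jP) (x : P) = h (rInv x) := by
    intro x
    have hx := hPa ⟨(x : P), lift x⟩
    have hunits : Units.map f.toMonoidHom (rR ⟨(x : P), lift x⟩) = rInv x := by
      ext
      have := hrR ⟨(x : P), lift x⟩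
      simp only [Units.coe_map]
      rw [this, hrInv x]
      rfl
    calc (g.comp jP) (x : P) = g (jP (x : P)) := rfl
      _ = g (uR (rR ⟨(x : P), lift x⟩)) := by rw [hx]
      _ = h (Units.map f.toMonoidHom (rR ⟨(x : P), lift x⟩)) := hgh _
      _ = h (rInv x) := by rw [hunits]
  obtain ⟨k, ⟨hk1, hk2⟩, hkuniq⟩ := hMapush T (g.comp jP) h hcomp
  -- k ∘ ψ = g, by uniqueness in hPapush
  have hcompP : ∀ x : Submonoid.comap αR (IsUnit.submonoid R),
      (g.comp jP) (x : P) = (g.comp uR) (rR x) := by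
    intro x; simp [hPa x]
  obtain ⟨k', ⟨_, _⟩, hk'uniq⟩ := hPapush T (g.comp jP) (g.comp uR) hcompP
  have hg : k' = g := (hk'uniq g ⟨fun x => rfl, fun v => rfl⟩).symm
  have hkψ : k' = k.comp ψ := by
    refine (hk'uniq (k.comp ψ) ?_).symm
    refine ⟨fun x => ?_, fun v => ?_⟩
    · simp only [MonoidHom.comp_apply, hψj x, hk1 x]
    · simp only [MonoidHom.comp_apply, hψu v, hk2]
      exact (hgh v).symm
  have hkg : ∀ x, k (ψ x) = g x := by
    intro x
    have := congrArg (fun m => m x) (hkψ.symm.trans hg)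
    simpa using this
  refine ⟨k, ⟨hkg, hk2⟩, ?_⟩
  intro k'' ⟨h1, h2⟩
  refine hkuniq k'' ⟨fun x => ?_, h2⟩
  have := h1 (jP x)
  rw [hψj x] at this
  rw [this]; rfl
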